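/- arXiv:1001.3896 — 8 statements merged into one kernel-verified Lean document; each statement's English description precedes it below -/
import Mathlib

section
/- Let g be a finite simple graph on player set 𝒩, with neighborhood N_i for each i. Fix f differentiable, strictly increasing, strictly concave with f(0)=0, c>0, and δ>0 with f'(δ)=c. A strategy profile s* ∈ [0,M]^𝒩 (with M ≥ δ) is a pure Nash equilibrium of the game with payoffs Π_i(s) = f(s_i + Σ_{j ∈ N_i} s_j) − c·s_i if and only if for every player i: s*_i = δ − Σ_{j ∈ N_i} s*_j when Σ_{j ∈ N_i} s*_j < δ, and s*_i = 0 when Σ_{j ∈ N_i} s*_j ≥ δ. -/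
open Finset

/-- Key one-dimensional lemma: the payoff `x ↦ f (x + T) - c * x` on `[0, M]`
is strictly maximized at `δ - T` if `T < δ`, and at `0` otherwise. -/
lemma payoff_strict_max
    (f : ℝ → ℝ) (c δ M T : ℝ)
    (hf : Differentiable ℝ f)
    (hanti : StrictAntiOn (deriv f) Set.univ)
    (hδ : 0 < δ) (hderiv : deriv f δ = c) (hM : δ ≤ M) (hT : 0 ≤ T) :
    ∀ x ∈ Set.Icc (0 : ℝ) M, x ≠ (if T < δ then δ - T else 0) →
      f (x + T) - c * x < f ((if T < δ then δ - T else 0) + T)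
        - c * (if T < δ then δ - T else 0) := by
  set φ : ℝ → ℝ := fun x => f (x + T) - c * x with hφ
  have hφd : ∀ x : ℝ, HasDerivAt φ (deriv f (x + T) - c) x := by
    intro x
    have h1 : HasDerivAt (fun x : ℝ => x + T) 1 x := (hasDerivAt_id x).add_const T
    have h2 : HasDerivAt (fun x : ℝ => f (x + T)) (deriv f (x + T) * 1) x :=
      ((hf (x + T)).hasDerivAt).comp x h1
    have h3 : HasDerivAt (fun x : ℝ => c * x) c x := by
      simpa using (hasDerivAt_id x).const_mul c
    rw [mul_one] at h2
    exact h2.sub h3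
  have hφc : Continuous φ := by
    exact (hf.continuous.comp (by continuity)).sub (by continuity)
  -- sign of derivative
  have hpos : ∀ x, x + T < δ → 0 < deriv f (x + T) - c := by
    intro x hx
    have := hanti (Set.mem_univ (x + T)) (Set.mem_univ δ) hx
    rw [hderiv] at this; linarith
  have hneg : ∀ x, δ < x + T → deriv f (x + T) - c < 0 := by
    intro x hx
    have := hanti (Set.mem_univ δ) (Set.mem_univ (x + T)) hx
    rw [hderiv] at this; linarith
  intro x hx hne
  by_cases hTδ : T < δ
  · simp only [if_pos hTδ] at hne ⊢
    rcases lt_or_gt_of_ne hne with hlt | hgt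
    · -- x < δ - T : φ strictly increasing on [x, δ - T]
      have hmono : StrictMonoOn φ (Set.Icc x (δ - T)) := by
        apply strictMonoOn_of_deriv_pos (convex_Icc _ _) (hφc.continuousOn)
        intro y hy
        rw [interior_Icc] at hy
        rw [(hφd y).deriv]
        exact hpos y (by linarith [hy.2])
      exact hmono (Set.left_mem_Icc.2 hlt.le) (Set.right_mem_Icc.2 hlt.le) hlt
    · -- δ - T < x : φ strictly decreasing on [δ - T, x]
      have hmono : StrictAntiOn φ (Set.Icc (δ - T) x) := by
        apply strictAntiOn_of_deriv_neg (convex_Icc _ _) (hφc.continuousOn)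
        intro y hy
        rw [interior_Icc] at hy
        rw [(hφd y).deriv]
        exact hneg y (by linarith [hy.1])
      exact hmono (Set.left_mem_Icc.2 hgt.le) (Set.right_mem_Icc.2 hgt.le) hgt
  · simp only [if_neg hTδ] at hne ⊢
    push_neg at hTδ
    have hx0 : 0 < x := lt_of_le_of_ne hx.1 (Ne.symm hne)
    have hmono : StrictAntiOn φ (Set.Icc (0 : ℝ) x) := by
      apply strictAntiOn_of_deriv_neg (convex_Icc _ _) (hφc.continuousOn)
      intro y hy
      rw [interior_Icc] at hy
      rw [(hφd y).deriv]
      exact hneg y (by linarith [hy.1])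
    exact hmono (Set.left_mem_Icc.2 hx0.le) (Set.right_mem_Icc.2 hx0.le) hx0

/-- Characterization of pure Nash equilibria of the local public goods game on a finite
simple graph: `s*` is a PNE iff each player best-responds via
`s*_i = δ - Σ_{j ∈ N_i} s*_j` when the neighbor sum is `< δ`, and `s*_i = 0` otherwise. -/
theorem PNE_characterization
    {V : Type*} [Fintype V] (G : SimpleGraph V) [DecidableRel G.Adj]
    (f : ℝ → ℝ) (c δ M : ℝ)
    (hf : Differentiable ℝ f)
    (hmono : StrictMono f)
    (hconc : StrictConcaveOn ℝ Set.univ f)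
    (hf0 : f 0 = 0)
    (hc : 0 < c) (hδ : 0 < δ)
    (hderiv : deriv f δ = c)
    (hM : δ ≤ M)
    (s : V → ℝ) (hs : ∀ i, s i ∈ Set.Icc (0 : ℝ) M) :
    (∀ i, ∀ x ∈ Set.Icc (0 : ℝ) M,
        f (x + ∑ j ∈ G.neighborFinset i, s j) - c * x ≤
          f (s i + ∑ j ∈ G.neighborFinset i, s j) - c * s i) ↔
      (∀ i, ((∑ j ∈ G.neighborFinset i, s j) < δ →
                s i = δ - ∑ j ∈ G.neighborFinset i, s j) ∧
            (δ ≤ (∑ j ∈ G.neighborFinset i, s j) → s i = 0)) := by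
  have hanti : StrictAntiOn (deriv f) Set.univ := by
    have := hconc.strictAntiOn_deriv (fun x _ => hf x)
    simpa [interior_univ] using this
  have key := fun (T : ℝ) (hT : 0 ≤ T) =>
    payoff_strict_max f c δ M T hf hanti hδ hderiv hM hT
  constructor
  · intro h i
    set T := ∑ j ∈ G.neighborFinset i, s j with hTdef
    have hT : 0 ≤ T := Finset.sum_nonneg fun j _ => (hs j).1
    set x' : ℝ := if T < δ then δ - T else 0 with hx'
    have hx'mem : x' ∈ Set.Icc (0 : ℝ) M := by
      rw [hx']; split_ifs with h'
      · constructor <;> linarith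
      · constructor <;> linarith
    have hsi : s i = x' := by
      by_contra hne
      have h1 := key T hT (s i) (hs i) hne
      have h2 := h i x' hx'mem
      linarith
    constructor
    · intro hlt
      rw [hsi, hx', if_pos hlt]
    · intro hge
      rw [hsi, hx', if_neg (not_lt.2 hge)]
  · intro h i x hx
    set T := ∑ j ∈ G.neighborFinset i, s j with hTdef
    have hT : 0 ≤ T := Finset.sum_nonneg fun j _ => (hs j).1
    have hsi : s i = if T < δ then δ - T else 0 := by
      split_ifs with h'
      · exact (h i).1 h'
      · exact (h i).2 (not_lt.1 h')
    rcases eq_or_ne x (s i) with rfl | hne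
    · exact le_rfl
    · rw [hsi] at hne ⊢
      exact (key T hT x hx hne).le
end

section
/- For any finite simple graph g on vertex set 𝒩 and any δ > 0, there exists a vector s ∈ [0, δ]^𝒩 satisfying s_i = max(δ − Σ_{j ∈ N_i(g)} s_j, 0) for every i ∈ 𝒩. Consequently, the local public goods game on g possesses at least one pure Nash equilibrium. -/
open Finset

/-- Existence of a pure Nash equilibrium: for any finite simple graph and any `δ > 0`
there is a profile `s ∈ [0, δ]^𝒩` with `s_i = max (δ - Σ_{j ∈ N_i} s_j) 0` for all `i`. -/
theorem PNE_exists
    {V : Type*} [Fintype V] (G : SimpleGraph V) [DecidableRel G.Adj]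
    (δ : ℝ) (hδ : 0 < δ) :
    ∃ s : V → ℝ, (∀ i, s i ∈ Set.Icc (0 : ℝ) δ) ∧
      ∀ i, s i = max (δ - ∑ j ∈ G.neighborFinset i, s j) 0 := by
  classical
  -- collection of independent finsets
  set S : Finset (Finset V) :=
    Finset.univ.filter (fun t => ∀ a ∈ t, ∀ b ∈ t, ¬ G.Adj a b) with hS
  have hSne : S.Nonempty := ⟨∅, by simp [hS]⟩
  obtain ⟨t, htS, htmax⟩ := S.exists_max_image Finset.card hSne
  have htind : ∀ a ∈ t, ∀ b ∈ t, ¬ G.Adj a b := by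
    have := (Finset.mem_filter.mp htS).2
    exact this
  -- maximality: every vertex outside t has a neighbor in t
  have hmaxl : ∀ i ∉ t, ∃ j ∈ t, G.Adj i j := by
    intro i hi
    by_contra h
    push_neg at h
    have hins : insert i t ∈ S := by
      simp only [hS, Finset.mem_filter, Finset.mem_univ, true_and]
      intro a ha b hb hadj
      rcases Finset.mem_insert.mp ha with ha' | ha <;>
        rcases Finset.mem_insert.mp hb with hb' | hb
      · rw [ha', hb'] at hadj; exact G.loopless.irrefl i hadj
      · rw [ha'] at hadj; exact h b hb hadj
      · rw [hb'] at hadj; exact h a ha hadj.symm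
      · exact htind a ha b hb hadj
    have := htmax _ hins
    have : t.card < (insert i t).card := Finset.card_lt_card (Finset.ssubset_insert hi)
    omega
  refine ⟨fun i => if i ∈ t then δ else 0, ?_, ?_⟩
  · intro i
    by_cases hi : i ∈ t <;> simp [hi, le_of_lt hδ]
  · intro i
    by_cases hi : i ∈ t
    · have hsum : ∑ j ∈ G.neighborFinset i, (if j ∈ t then δ else 0) = 0 := by
        apply Finset.sum_eq_zero
        intro j hj
        have hadj : G.Adj i j := (SimpleGraph.mem_neighborFinset _ _ _).mp hj
        have : j ∉ t := fun hjt => htind i hi j hjt hadj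
        simp [this]
      simp [hi, hsum, le_of_lt hδ, max_eq_left]
    · obtain ⟨j, hjt, hadj⟩ := hmaxl i hi
      have hjmem : j ∈ G.neighborFinset i := (SimpleGraph.mem_neighborFinset _ _ _).mpr hadj
      have hle : δ ≤ ∑ j ∈ G.neighborFinset i, (if j ∈ t then δ else 0) := by
        have := Finset.single_le_sum (f := fun j => if j ∈ t then δ else 0)
          (fun k _ => by positivity) hjmem
        simpa [hjt] using this
      simp only [hi, if_false]
      rw [max_eq_right (by linarith)]
end

section
/- Let s* be a pure Nash equilibrium of the local public goods game on a finite graph g with payoffs Π_i(s) = f(s_i + Σ_{j∈N_i} s_j) − c·s_i, where f is strictly increasing, strictly concave, f(0)=0, f'(δ)=c, c>0. If s*_i < s*_j for two players i, j, then Π_i(s*) > Π_j(s*). -/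
open Finset

/-- At any pure Nash equilibrium, if player `i` contributes strictly less than player `j`,
then player `i`'s payoff is strictly larger. -/
theorem PNE_less_effort_more_payoff
    {V : Type*} [Fintype V] (G : SimpleGraph V) [DecidableRel G.Adj]
    (f : ℝ → ℝ) (c δ : ℝ)
    (hmono : StrictMono f)
    (hconc : StrictConcaveOn ℝ Set.univ f)
    (hf0 : f 0 = 0)
    (hc : 0 < c) (hδ : 0 < δ)
    (hderiv : deriv f δ = c)
    (s : V → ℝ)
    (hs : ∀ i, s i = max (δ - ∑ j ∈ G.neighborFinset i, s j) 0) :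
    ∀ i j, s i < s j →
      f (s j + ∑ k ∈ G.neighborFinset j, s k) - c * s j <
        f (s i + ∑ k ∈ G.neighborFinset i, s k) - c * s i := by
  intro i j hij
  set ni := ∑ k ∈ G.neighborFinset i, s k with hni
  set nj := ∑ k ∈ G.neighborFinset j, s k with hnj
  have hi0 : 0 ≤ s i := by rw [hs i]; exact le_max_right _ _
  have hj0 : 0 < s j := lt_of_le_of_lt hi0 hij
  have hjeq : s j = δ - nj := by
    have h := hs j
    rcases le_or_gt (δ - nj) 0 with hle | hlt
    · rw [max_eq_right hle] at h; linarith
    · rw [max_eq_left hlt.le] at h; exact h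
  have hjδ : s j + nj = δ := by linarith
  rw [hjδ]
  rcases eq_or_lt_of_le hi0 with h0 | h0
  · have hge : δ ≤ ni := by
      have h := hs i
      rw [← h0] at h
      by_contra hlt
      push_neg at hlt
      rw [max_eq_left (by linarith)] at h
      linarith
    have hle : f δ ≤ f (s i + ni) := hmono.le_iff_le.mpr (by linarith)
    nlinarith [mul_pos hc hj0]
  · have hieq : s i = δ - ni := by
      have h := hs i
      rcases le_or_gt (δ - ni) 0 with hle | hlt
      · rw [max_eq_right hle] at h; linarith
      · rw [max_eq_left hlt.le] at h; exact h
    have hiδ : s i + ni = δ := by linarith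
    rw [hiδ]
    nlinarith
end

section
/- Let g be a finite graph and define PNE_g⁺ as the set of pure Nash equilibria s* such that for all players i, j, |N_i(g)| > |N_j(g)| implies Π_i(s*) ≥ Π_j(s*). If s* ∈ PNE_g⁺, and u, v are players with |N_u(g)| < |N_v(g)| and s*_u = 0, then s*_v = 0. -/
open Finset

/-- Zero-effort propagation in degree-monotone equilibria (`PNE_g⁺`): if `s*` is a PNE
such that higher-degree players get weakly higher payoffs, `|N_u| < |N_v|` and `s*_u = 0`,
then `s*_v = 0`. -/
theorem PNEplus_zero_propagates
    {V : Type*} [Fintype V] (G : SimpleGraph V) [DecidableRel G.Adj]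
    (f : ℝ → ℝ) (c δ : ℝ)
    (hmono : StrictMono f)
    (hconc : StrictConcaveOn ℝ Set.univ f)
    (hf0 : f 0 = 0)
    (hc : 0 < c) (hδ : 0 < δ)
    (hderiv : deriv f δ = c)
    (s : V → ℝ)
    (hs : ∀ i, s i = max (δ - ∑ j ∈ G.neighborFinset i, s j) 0)
    (hplus : ∀ i j, G.degree j < G.degree i →
      f (s j + ∑ k ∈ G.neighborFinset j, s k) - c * s j ≤
        f (s i + ∑ k ∈ G.neighborFinset i, s k) - c * s i)
    (u v : V) (hdeg : G.degree u < G.degree v) (hu : s u = 0) :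
    s v = 0 := by
  by_contra hv
  -- s v > 0, so s v = δ - Σ_v and s v + Σ_v = δ
  have hsv := hs v
  have hpos : s v = δ - ∑ j ∈ G.neighborFinset v, s j := by
    rcases max_cases (δ - ∑ j ∈ G.neighborFinset v, s j) 0 with ⟨h1, _⟩ | ⟨h1, _⟩
    · rw [hsv, h1]
    · exact absurd (hsv.trans h1) hv
  have hsvpos : 0 < s v := lt_of_le_of_ne (hsv ▸ le_max_right _ _) (Ne.symm hv)
  have hsum : s v + ∑ j ∈ G.neighborFinset v, s j = δ := by rw [hpos]; ring
  -- Σ_u ≥ δ since s u = 0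
  have hSu : δ ≤ ∑ j ∈ G.neighborFinset u, s j := by
    have := hs u
    rw [hu] at this
    have : δ - ∑ j ∈ G.neighborFinset u, s j ≤ 0 := by
      by_contra h
      push_neg at h
      rw [max_eq_left h.le] at this
      linarith
    linarith
  have h1 := hplus v u hdeg
  rw [hu, hsum] at h1
  have h2 : f δ ≤ f (0 + ∑ j ∈ G.neighborFinset u, s j) := by
    apply hmono.monotone; linarith
  nlinarith
end

section
/- Let g be a finite graph and s* ∈ PNE_g⁺. If u, v are players with |N_u(g)| < |N_v(g)| and s*_v > 0, then s*_u > 0. -/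
open Finset

/-- Contrapositive of the zero-propagation lemma: in a degree-monotone equilibrium,
if `|N_u| < |N_v|` and `s*_v > 0`, then `s*_u > 0`. -/
theorem PNEplus_positive_propagates_down
    {V : Type*} [Fintype V] (G : SimpleGraph V) [DecidableRel G.Adj]
    (f : ℝ → ℝ) (c δ : ℝ)
    (hmono : StrictMono f)
    (hconc : StrictConcaveOn ℝ Set.univ f)
    (hf0 : f 0 = 0)
    (hc : 0 < c) (hδ : 0 < δ)
    (hderiv : deriv f δ = c)
    (s : V → ℝ)
    (hs : ∀ i, s i = max (δ - ∑ j ∈ G.neighborFinset i, s j) 0)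
    (hplus : ∀ i j, G.degree j < G.degree i →
      f (s j + ∑ k ∈ G.neighborFinset j, s k) - c * s j ≤
        f (s i + ∑ k ∈ G.neighborFinset i, s k) - c * s i)
    (u v : V) (hdeg : G.degree u < G.degree v) (hv : 0 < s v) :
    0 < s u := by
  by_contra h
  push_neg at h
  have hu0 : s u = 0 := le_antisymm h (by rw [hs u]; exact le_max_right _ _)
  -- neighbors of u contribute at least δ
  have hTu : δ ≤ ∑ j ∈ G.neighborFinset u, s j := by
    have := hs u
    rw [hu0] at this
    by_contra hlt
    push_neg at hlt
    have : (0:ℝ) = max (δ - ∑ j ∈ G.neighborFinset u, s j) 0 := this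
    have hpos : 0 < δ - ∑ j ∈ G.neighborFinset u, s j := by linarith
    rw [max_eq_left hpos.le] at this
    linarith
  -- v's total is exactly δ
  have hTv : s v + ∑ k ∈ G.neighborFinset v, s k = δ := by
    have := hs v
    rcases le_or_gt (δ - ∑ j ∈ G.neighborFinset v, s j) 0 with hle | hlt
    · rw [max_eq_right hle] at this; linarith
    · rw [max_eq_left hlt.le] at this; linarith
  have h1 : f δ ≤ f (s u + ∑ k ∈ G.neighborFinset u, s k) := by
    apply hmono.monotone
    rw [hu0]; linarith
  have h2 := hplus v u hdeg
  rw [hTv] at h2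
  nlinarith
end

section
/- Let g be a finite simple graph and let s* be the profile with s*_i = δ for i in a set I ⊆ 𝒩 and s*_i = 0 otherwise. Then s* is a pure Nash equilibrium of the local public goods game if and only if I is a maximal independent set of g (no two vertices of I are adjacent, and every vertex outside I has a neighbor in I). -/
open Finset

lemma sum_ind_nonneg {V : Type*} [DecidableEq V] (s I : Finset V) {δ : ℝ} (hδ : 0 ≤ δ) :
    0 ≤ ∑ j ∈ s, (if j ∈ I then δ else 0) := by
  apply Finset.sum_nonneg
  intro j _
  split <;> simp [hδ]

/-- The `{0, δ}`-valued profile supported on `I` is a pure Nash equilibrium iff `I` is a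
maximal independent set of the graph. -/
theorem PNE_indicator_iff_maximal_independent
    {V : Type*} [Fintype V] [DecidableEq V] (G : SimpleGraph V) [DecidableRel G.Adj]
    (δ : ℝ) (hδ : 0 < δ) (I : Finset V) :
    (∀ i, (if i ∈ I then δ else 0) =
        max (δ - ∑ j ∈ G.neighborFinset i, if j ∈ I then δ else 0) 0) ↔
      ((∀ u ∈ I, ∀ v ∈ I, ¬ G.Adj u v) ∧ ∀ v ∉ I, ∃ u ∈ I, G.Adj v u) := by
  constructor
  · intro h
    constructor
    · intro u hu v hv hadj
      have h1 := h u
      rw [if_pos hu] at h1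
      -- max (δ - S) 0 = δ with δ > 0 forces S = 0
      have hS : (0:ℝ) ≤ ∑ j ∈ G.neighborFinset u, (if j ∈ I then δ else 0) :=
        sum_ind_nonneg _ _ hδ.le
      have hSv : δ ≤ ∑ j ∈ G.neighborFinset u, (if j ∈ I then δ else 0) := by
        have hmem : v ∈ G.neighborFinset u := by
          rwa [SimpleGraph.mem_neighborFinset]
        calc δ = (if v ∈ I then δ else 0) := by rw [if_pos hv]
          _ ≤ _ := Finset.single_le_sum (f := fun j => if j ∈ I then δ else 0) (fun j _ => by positivity) hmem
      have : δ ≤ 0 := by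
        rcases le_total (δ - ∑ j ∈ G.neighborFinset u, (if j ∈ I then δ else 0)) 0 with hc | hc
        · rw [max_eq_right hc] at h1; linarith
        · rw [max_eq_left hc] at h1; linarith
      linarith
    · intro v hv
      have h1 := h v
      rw [if_neg hv] at h1
      by_contra hno
      push_neg at hno
      have hS0 : ∑ j ∈ G.neighborFinset v, (if j ∈ I then δ else 0) = 0 := by
        apply Finset.sum_eq_zero
        intro j hj
        rw [SimpleGraph.mem_neighborFinset] at hj
        rw [if_neg (fun hjI => hno j hjI hj)]
      rw [hS0, sub_zero, max_eq_left hδ.le] at h1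
      linarith
  · rintro ⟨hind, hdom⟩ i
    by_cases hi : i ∈ I
    · rw [if_pos hi]
      have hS0 : ∑ j ∈ G.neighborFinset i, (if j ∈ I then δ else 0) = 0 := by
        apply Finset.sum_eq_zero
        intro j hj
        rw [SimpleGraph.mem_neighborFinset] at hj
        rw [if_neg (fun hjI => hind i hi j hjI hj)]
      rw [hS0, sub_zero, max_eq_left hδ.le]
    · rw [if_neg hi]
      obtain ⟨u, hu, hadj⟩ := hdom i hi
      have hSv : δ ≤ ∑ j ∈ G.neighborFinset i, (if j ∈ I then δ else 0) := by
        have hmem : u ∈ G.neighborFinset i := by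
          rwa [SimpleGraph.mem_neighborFinset]
        calc δ = (if u ∈ I then δ else 0) := by rw [if_pos hu]
          _ ≤ _ := Finset.single_le_sum (f := fun j => if j ∈ I then δ else 0) (fun j _ => by positivity) hmem
      rw [max_eq_right (by linarith)]
end

section
/- There exists a finite tree g such that the set PNE_g⁺ is empty: no pure Nash equilibrium of the local public goods game on g satisfies the property that players with strictly more neighbors receive weakly higher payoff. -/
open Finset

/-! The witness tree: a "spider" on 8 vertices with center `0` of degree 3 and three
legs `0-1-2`, `0-3-4`, `0-5-6-7` of lengths 2, 2, 3. -/

def gAdj (i j : Fin 8) : Bool :=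
  match i.val, j.val with
  | 0, 1 => true | 1, 0 => true
  | 1, 2 => true | 2, 1 => true
  | 0, 3 => true | 3, 0 => true
  | 3, 4 => true | 4, 3 => true
  | 0, 5 => true | 5, 0 => true
  | 5, 6 => true | 6, 5 => true
  | 6, 7 => true | 7, 6 => true
  | _, _ => false

def G8 : SimpleGraph (Fin 8) where
  Adj i j := gAdj i j = true
  symm := ⟨fun i j h => (by decide : ∀ i j : Fin 8, gAdj i j = true → gAdj j i = true) i j h⟩
  loopless := ⟨fun i h => (by decide : ∀ i : Fin 8, ¬ gAdj i i = true) i h⟩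

instance : DecidableRel G8.Adj := fun _ _ => inferInstanceAs (Decidable (_ = true))

instance (e : Sym2 (Fin 8)) : DecidableRel (SimpleGraph.fromEdgeSet {e}).Adj := fun v w =>
  decidable_of_iff (s(v,w) = e ∧ v ≠ w) (by rw [SimpleGraph.fromEdgeSet_adj]; simp)

instance (e : Sym2 (Fin 8)) : DecidableRel (G8 \ SimpleGraph.fromEdgeSet {e}).Adj := fun v w =>
  decidable_of_iff (G8.Adj v w ∧ ¬ (SimpleGraph.fromEdgeSet {e}).Adj v w)
    (by rw [SimpleGraph.sdiff_adj])

lemma G8_connected : G8.Connected := by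
  rw [SimpleGraph.connected_iff]
  refine ⟨?_, ⟨0⟩⟩
  have a01 : G8.Adj 0 1 := by decide
  have a12 : G8.Adj 1 2 := by decide
  have a03 : G8.Adj 0 3 := by decide
  have a34 : G8.Adj 3 4 := by decide
  have a05 : G8.Adj 0 5 := by decide
  have a56 : G8.Adj 5 6 := by decide
  have a67 : G8.Adj 6 7 := by decide
  have h : ∀ v : Fin 8, G8.Reachable 0 v := by
    intro v
    fin_cases v
    · exact SimpleGraph.Reachable.refl _
    · exact a01.reachable
    · exact a01.reachable.trans a12.reachable
    · exact a03.reachable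
    · exact a03.reachable.trans a34.reachable
    · exact a05.reachable
    · exact a05.reachable.trans a56.reachable
    · exact (a05.reachable.trans a56.reachable).trans a67.reachable
  exact fun u v => (h u).symm.trans (h v)

lemma G8_isTree : G8.IsTree := by
  constructor
  · exact G8_connected
  · rw [SimpleGraph.isAcyclic_iff_forall_adj_isBridge]
    have h : ∀ v w : Fin 8, G8.Adj v w → G8.IsBridge s(v,w) := by
      simp only [SimpleGraph.isBridge_iff]; decide
    exact fun {v w} hvw => h v w hvw

/-- Negative answer to Goyal's problem: there is a finite tree `g` on which, for every
admissible `f`, `c`, `δ`, no pure Nash equilibrium of the local public goods game is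
degree-monotone in payoffs; i.e. `PNE_g⁺ = ∅`. -/
theorem exists_tree_PNEplus_empty :
    ∃ (V : Type) (_ : Fintype V) (G : SimpleGraph V) (_ : DecidableRel G.Adj),
      G.IsTree ∧
      ∀ (f : ℝ → ℝ) (c δ : ℝ),
        StrictMono f → StrictConcaveOn ℝ Set.univ f → f 0 = 0 →
        0 < c → 0 < δ → deriv f δ = c →
        ¬ ∃ s : V → ℝ,
          ((∀ i, s i ∈ Set.Icc (0 : ℝ) δ) ∧
            ∀ i, s i = max (δ - ∑ j ∈ G.neighborFinset i, s j) 0) ∧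
          ∀ i j, G.degree j < G.degree i →
            f (s j + ∑ k ∈ G.neighborFinset j, s k) - c * s j ≤
              f (s i + ∑ k ∈ G.neighborFinset i, s k) - c * s i := by
  refine ⟨Fin 8, inferInstance, G8, inferInstance, G8_isTree, ?_⟩
  intro f c δ hf _ _ hc hδ _
  rintro ⟨s, ⟨hIcc, hBR⟩, hmono⟩
  -- neighbor sums, concretely
  have n0 : ∑ j ∈ G8.neighborFinset 0, s j = s 1 + s 3 + s 5 := by
    rw [show G8.neighborFinset 0 = {1,3,5} from by decide,
      Finset.sum_insert (by decide), Finset.sum_insert (by decide), Finset.sum_singleton]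
    ring
  have n1 : ∑ j ∈ G8.neighborFinset 1, s j = s 0 + s 2 := by
    rw [show G8.neighborFinset 1 = {0,2} from by decide,
      Finset.sum_insert (by decide), Finset.sum_singleton]
  have n2 : ∑ j ∈ G8.neighborFinset 2, s j = s 1 := by
    rw [show G8.neighborFinset 2 = {1} from by decide, Finset.sum_singleton]
  have n4 : ∑ j ∈ G8.neighborFinset 4, s j = s 3 := by
    rw [show G8.neighborFinset 4 = {3} from by decide, Finset.sum_singleton]
  have n5 : ∑ j ∈ G8.neighborFinset 5, s j = s 0 + s 6 := by
    rw [show G8.neighborFinset 5 = {0,6} from by decide,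
      Finset.sum_insert (by decide), Finset.sum_singleton]
  have n6 : ∑ j ∈ G8.neighborFinset 6, s j = s 5 + s 7 := by
    rw [show G8.neighborFinset 6 = {5,7} from by decide,
      Finset.sum_insert (by decide), Finset.sum_singleton]
  have n7 : ∑ j ∈ G8.neighborFinset 7, s j = s 6 := by
    rw [show G8.neighborFinset 7 = {6} from by decide, Finset.sum_singleton]
  have pos : ∀ i, 0 ≤ s i := fun i => (hIcc i).1
  have sle : ∀ i, s i ≤ δ := fun i => (hIcc i).2
  -- each player's action is at least δ minus the neighbor sum
  have hge : ∀ i : Fin 8, δ - ∑ j ∈ G8.neighborFinset i, s j ≤ s i := by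
    intro i; rw [hBR i]; exact le_max_left _ _
  -- a positive contributor's total provision is exactly δ
  have heq : ∀ i : Fin 8, 0 < s i → s i + ∑ j ∈ G8.neighborFinset i, s j = δ := by
    intro i hi
    rcases le_or_gt (δ - ∑ j ∈ G8.neighborFinset i, s j) 0 with h | h
    · rw [hBR i, max_eq_right h] at hi; exact absurd hi (lt_irrefl 0)
    · have h2 := hBR i; rw [max_eq_left h.le] at h2; linarith
  -- key: degree-monotonicity forces lower-degree players to contribute at least as much
  -- as any positive contributor of higher degree
  have key : ∀ i j : Fin 8, G8.degree j < G8.degree i → 0 < s i → s i ≤ s j := by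
    intro i j hd hi
    have h1 := hmono i j hd
    rw [heq i hi] at h1
    have h2 : f δ ≤ f (s j + ∑ k ∈ G8.neighborFinset j, s k) :=
      hf.monotone (by have := hge j; linarith)
    have h3 : c * s i ≤ c * s j := by linarith
    exact le_of_mul_le_mul_left h3 hc
  rcases lt_or_eq_of_le (pos 0) with h0 | h0
  · -- center contributes: its leg-neighbors and the leaf beyond must contribute at least
    -- as much, contradicting the best-response equations
    have h2 := key 0 2 (by decide) h0
    have h1 := key 0 1 (by decide) h0
    have p2 := heq 2 (lt_of_lt_of_le h0 h2); rw [n2] at p2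
    have p1 := heq 1 (lt_of_lt_of_le h0 h1); rw [n1] at p1
    linarith
  · -- center contributes nothing
    rcases lt_or_eq_of_le (pos 6) with h6 | h6
    · -- the middle vertex 6 of the long leg contributes
      have p6 := heq 6 h6; rw [n6] at p6
      have g5 := hge 5; rw [n5] at g5
      have g7 := hge 7; rw [n7] at g7
      have h6δ : s 6 = δ := le_antisymm (sle 6) (by linarith)
      have h5z : s 5 = 0 := by linarith [pos 5, pos 7]
      have h7z : s 7 = 0 := by linarith [pos 5, pos 7]
      have h2δ : s 2 = δ := le_antisymm (sle 2) (by
        have := key 6 2 (by decide) h6; linarith)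
      have p2 := heq 2 (by linarith); rw [n2] at p2
      have h4δ : s 4 = δ := le_antisymm (sle 4) (by
        have := key 6 4 (by decide) h6; linarith)
      have p4 := heq 4 (by linarith); rw [n4] at p4
      have g0 := hge 0; rw [n0] at g0
      linarith
    · -- vertices 0 and 6 both contribute nothing: then 5 and 7 play δ, forcing the
      -- other leaves to play δ and the other legs' middles to play 0; then vertex 6
      -- (degree 2) enjoys provision 2δ while the center (degree 3) only gets δ.
      have e5 := hBR 5; rw [n5, ← h0, ← h6] at e5
      have h5δ : s 5 = δ := by rw [e5]; norm_num [max_eq_left hδ.le]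
      have e7 := hBR 7; rw [n7, ← h6] at e7
      have h7δ : s 7 = δ := by rw [e7]; norm_num [max_eq_left hδ.le]
      have h2δ : s 2 = δ := le_antisymm (sle 2) (by
        have := key 5 2 (by decide) (by rw [h5δ]; exact hδ); linarith)
      have p2 := heq 2 (by linarith); rw [n2] at p2
      have h4δ : s 4 = δ := le_antisymm (sle 4) (by
        have := key 5 4 (by decide) (by rw [h5δ]; exact hδ); linarith)
      have p4 := heq 4 (by linarith); rw [n4] at p4
      have hm := hmono 0 6 (by decide)
      rw [n6, n0] at hm
      have hlt : f (s 0 + (s 1 + s 3 + s 5)) < f (s 6 + (s 5 + s 7)) := by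
        apply hf
        have h1z : s 1 = 0 := by linarith
        have h3z : s 3 = 0 := by linarith
        rw [← h0, ← h6, h5δ, h7δ, h1z, h3z]
        linarith
      have hc6 : c * s 6 = 0 := by rw [← h6, mul_zero]
      have hc0 : c * s 0 = 0 := by rw [← h0, mul_zero]
      linarith
end

section
/- Let g be the complete graph on n ≥ 2 vertices. Then a profile s* ∈ [0,δ]^n is a pure Nash equilibrium of the local public goods game if and only if Σ_i s*_i = δ, and for any such equilibrium, Π_i(s*) ≥ Π_j(s*) if and only if s*_i ≤ s*_j. -/
open Finset

/-- On the complete graph on `n ≥ 2` vertices, a profile `s ∈ [0,δ]^n` is a PNE iff the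
total effort equals `δ`; and at any such equilibrium `Π_i ≥ Π_j ↔ s_i ≤ s_j`. -/
theorem PNE_complete_graph
    {V : Type*} [Fintype V] [DecidableEq V]
    (hn : 2 ≤ Fintype.card V)
    (f : ℝ → ℝ) (c δ : ℝ)
    (hmono : StrictMono f)
    (hconc : StrictConcaveOn ℝ Set.univ f)
    (hf0 : f 0 = 0)
    (hc : 0 < c) (hδ : 0 < δ)
    (hderiv : deriv f δ = c)
    (s : V → ℝ) (hs : ∀ i, s i ∈ Set.Icc (0 : ℝ) δ) :
    ((∀ i, s i = max (δ - ∑ j ∈ (⊤ : SimpleGraph V).neighborFinset i, s j) 0) ↔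
        ∑ i, s i = δ) ∧
    ((∀ i, s i = max (δ - ∑ j ∈ (⊤ : SimpleGraph V).neighborFinset i, s j) 0) →
      ∀ i j,
        (f (s j + ∑ k ∈ (⊤ : SimpleGraph V).neighborFinset j, s k) - c * s j ≤
            f (s i + ∑ k ∈ (⊤ : SimpleGraph V).neighborFinset i, s k) - c * s i) ↔
          s i ≤ s j) := by
  have hNF : ∀ i : V, (⊤ : SimpleGraph V).neighborFinset i = Finset.univ.erase i := by
    intro i
    ext j
    simp [SimpleGraph.mem_neighborFinset, eq_comm, ne_comm]
  have hsum : ∀ i : V, ∑ j ∈ (⊤ : SimpleGraph V).neighborFinset i, s j =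
      (∑ j, s j) - s i := by
    intro i
    rw [hNF i, Finset.sum_erase_eq_sub (Finset.mem_univ i)]
  have main : (∀ i, s i = max (δ - ∑ j ∈ (⊤ : SimpleGraph V).neighborFinset i, s j) 0) ↔
      ∑ i, s i = δ := by
    constructor
    · intro h
      by_contra hne
      -- each i: s i = max (δ - (T - s i)) 0
      have hall : ∀ i, s i = 0 := by
        intro i
        have hi := h i
        rw [hsum i] at hi
        rcases max_cases (δ - ((∑ j, s j) - s i)) 0 with ⟨h1, h2⟩ | ⟨h1, h2⟩
        · rw [h1] at hi
          exact absurd (by linarith) hne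
        · rw [hi, h1]
      have hT : ∑ j, s j = 0 := by
        simp [Finset.sum_congr rfl fun i _ => hall i]
      obtain ⟨i⟩ : Nonempty V := Fintype.card_pos_iff.mp (by omega)
      have hi := h i
      rw [hsum i, hT, hall i] at hi
      simp at hi
      linarith
    · intro hT i
      rw [hsum i, hT]
      have := (hs i).1
      simp
      linarith
  refine ⟨main, fun h i j => ?_⟩
  have hT := main.mp h
  rw [hsum i, hsum j, hT]
  have e1 : s i + (δ - s i) = δ := by ring
  have e2 : s j + (δ - s j) = δ := by ring
  rw [e1, e2]
  constructor <;> intro hle <;> nlinarith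
end
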